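/- Let (X,d) be a metric space endowed with a Borel measure μ, and let m > 0, λ ∈ [0,m), p ∈ [1,∞), λ₁ ≥ 0, D > 0 and C₀ > 0. Let G : (0,∞) × X × X → ℝ be measurable with 0 ≤ G(t,x,y) ≤ C₀ · max{1, t^{−m/2}} · exp(−λ₁·t − d(x,y)²/(2Dt)) for all t > 0 and x, y ∈ X, and with ∫_X G(t,x,y) dμ(y) ≤ 1 for all t > 0 and x ∈ X. Let u₀ : X → ℝ be measurable and N ≥ 0 be such that ∫_{B(x,R)} |u₀|^p dμ ≤ N^p · R^λ for every x ∈ X and R > 0. Then there exists a constant C > 0, depending only on C₀, m, λ, p and D, such that for all t > 0 and all x ∈ X: ∫_X G(t,x,y)·|u₀(y)| dμ(y) ≤ C · (min{1,t})^{−m/(2p)} · t^{λ/(2p)} · e^{−λ₁ t/p} · N. -/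

import Mathlib

set_option maxHeartbeats 1000000
open MeasureTheory

lemma aux_summable (lam D : ℝ) (hD : 0 < D) :
    Summable (fun k : ℕ => ((k : ℝ) + 1) ^ lam * Real.exp (-(k : ℝ) ^ 2 / (2 * D))) := by
  set r := Real.exp (-(1 / (2 * D))) with hr
  have hr0 : 0 < r := Real.exp_pos _
  have hr1 : r < 1 := by
    rw [hr, Real.exp_lt_one_iff, neg_lt, neg_zero]
    positivity
  set n := ⌈lam⌉₊ with hn
  have h1 : Summable (fun k : ℕ => (k : ℝ) ^ n * r ^ k) :=
    summable_pow_mul_geometric_of_norm_lt_one n (by rwa [Real.norm_eq_abs, abs_of_pos hr0])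
  have h2 : Summable (fun k : ℕ => ((k + 1 : ℕ) : ℝ) ^ n * r ^ (k + 1)) :=
    (summable_nat_add_iff 1).mpr h1
  have h3 : Summable (fun k : ℕ => ((k : ℝ) + 1) ^ n * r ^ k) := by
    refine (h2.mul_left r⁻¹).congr fun k => ?_
    push_cast
    rw [pow_succ]
    rw [show r⁻¹ * (((k:ℝ)+1) ^ n * (r ^ k * r)) = ((k:ℝ)+1) ^ n * r ^ k * (r⁻¹ * r) by ring,
      inv_mul_cancel₀ hr0.ne', mul_one]
  refine Summable.of_nonneg_of_le (fun k => by positivity) (fun k => ?_) h3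
  have hb : (1 : ℝ) ≤ (k : ℝ) + 1 := by
    have : (0:ℝ) ≤ (k:ℝ) := Nat.cast_nonneg k
    linarith
  have e1 : ((k : ℝ) + 1) ^ lam ≤ ((k : ℝ) + 1) ^ n := by
    rw [← Real.rpow_natCast ((k : ℝ) + 1) n]
    exact Real.rpow_le_rpow_of_exponent_le hb (Nat.le_ceil lam)
  have e2 : Real.exp (-(k : ℝ) ^ 2 / (2 * D)) ≤ r ^ k := by
    rw [hr, ← Real.exp_nat_mul]
    apply Real.exp_le_exp.mpr
    have hk2 : (k : ℝ) ≤ (k : ℝ) ^ 2 := by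
      have := Nat.le_self_pow (two_ne_zero) k
      exact_mod_cast this
    have : (k : ℝ) * -(1 / (2 * D)) = -(k : ℝ) / (2 * D) := by ring
    rw [this]
    gcongr <;> linarith
  calc ((k : ℝ) + 1) ^ lam * Real.exp (-(k : ℝ) ^ 2 / (2 * D))
      ≤ ((k : ℝ) + 1) ^ n * r ^ k := by
        apply mul_le_mul e1 e2 (Real.exp_pos _).le (by positivity)

theorem dispersive_Morrey_to_Linfty
    {X : Type*} [MetricSpace X] [MeasurableSpace X] [BorelSpace X]
    (μ : Measure X) (m lam p lam₁ D C₀ N : ℝ)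
    (hm : 0 < m) (hlam0 : 0 ≤ lam) (hlamm : lam < m) (hp : 1 ≤ p)
    (hlam₁ : 0 ≤ lam₁) (hD : 0 < D) (hC₀ : 0 < C₀)
    (G : ℝ → X → X → ℝ)
    (hGmeas : Measurable fun q : ℝ × X × X => G q.1 q.2.1 q.2.2)
    (hG0 : ∀ t > (0 : ℝ), ∀ x y : X, 0 ≤ G t x y)
    (hGbd : ∀ t > (0 : ℝ), ∀ x y : X, G t x y ≤
      C₀ * max 1 (t ^ (-(m / 2))) * Real.exp (-(lam₁ * t) - dist x y ^ 2 / (2 * D * t)))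
    (hGmarkov : ∀ t > (0 : ℝ), ∀ x : X, ∫⁻ y, ENNReal.ofReal (G t x y) ∂μ ≤ 1)
    (u₀ : X → ℝ) (hu₀ : Measurable u₀) (hN : 0 ≤ N)
    (hmor : ∀ (x : X) (R : ℝ), 0 < R →
      ∫⁻ y in Metric.ball x R, ENNReal.ofReal (|u₀ y| ^ p) ∂μ ≤
        ENNReal.ofReal (N ^ p * R ^ lam)) :
    ∃ C > (0 : ℝ), ∀ t > (0 : ℝ), ∀ x : X,
      ∫⁻ y, ENNReal.ofReal (G t x y * |u₀ y|) ∂μ ≤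
        ENNReal.ofReal (C * (min 1 t) ^ (-(m / (2 * p))) * t ^ (lam / (2 * p)) *
          Real.exp (-(lam₁ * t / p)) * N) := by
  have hp0 : (0 : ℝ) < p := lt_of_lt_of_le one_pos hp
  set a : ℕ → ℝ := fun k => ((k : ℝ) + 1) ^ lam * Real.exp (-(k : ℝ) ^ 2 / (2 * D)) with ha
  have hSsum : Summable a := aux_summable lam D hD
  set S : ℝ := ∑' k, a k with hSdef
  have hS1 : (1 : ℝ) ≤ S := by
    have h0 : a 0 = 1 := by
      simp [ha, Real.one_rpow, Real.exp_zero]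
    have := hSsum.le_tsum 0 (fun j _ => by positivity)
    rw [h0] at this; exact this
  have hS0 : (0 : ℝ) < S := lt_of_lt_of_le one_pos hS1
  refine ⟨(C₀ * S) ^ (1 / p), Real.rpow_pos_of_pos (by positivity) _, ?_⟩
  intro t ht x
  -- measurability of the kernel at fixed (t, x)
  have hGm : Measurable fun y => G t x y :=
    hGmeas.comp (measurable_const.prodMk (measurable_const.prodMk measurable_id))
  set s : ℝ := Real.sqrt t with hsdef
  have hs : 0 < s := Real.sqrt_pos.mpr ht
  have hslam : s ^ lam = t ^ (lam / 2) := by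
    rw [hsdef, Real.sqrt_eq_rpow, ← Real.rpow_mul ht.le]
    ring_nf
  -- annuli
  set A : ℕ → Set X := fun k => Metric.ball x (((k : ℝ) + 1) * s) \ Metric.ball x ((k : ℝ) * s)
    with hA
  have hAmeas : ∀ k, MeasurableSet (A k) := fun k =>
    measurableSet_ball.diff measurableSet_ball
  have hAdisj : Pairwise (Function.onFun Disjoint A) := by
    have key : ∀ j k : ℕ, j < k → Disjoint (A j) (A k) := by
      intro j k hjk
      rw [Set.disjoint_left]
      intro y hyj hyk
      have h1 : dist y x < ((j : ℝ) + 1) * s := Metric.mem_ball.mp hyj.1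
      have h2 : ¬ dist y x < (k : ℝ) * s := fun h => hyk.2 (Metric.mem_ball.mpr h)
      have : ((j : ℝ) + 1) * s ≤ (k : ℝ) * s := by
        have : ((j : ℝ) + 1) ≤ (k : ℝ) := by exact_mod_cast hjk
        nlinarith
      exact h2 (lt_of_lt_of_le h1 this)
    intro j k hjk
    rcases lt_or_gt_of_ne hjk with h | h
    · exact key j k h
    · exact (key k j h).symm
  have hAcover : (⋃ k, A k) = Set.univ := by
    ext y
    simp only [Set.mem_iUnion, Set.mem_univ, iff_true]
    refine ⟨⌊dist y x / s⌋₊, ?_, ?_⟩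
    · rw [Metric.mem_ball]
      have := Nat.lt_floor_add_one (dist y x / s)
      calc dist y x = dist y x / s * s := by field_simp
        _ < ((⌊dist y x / s⌋₊ : ℝ) + 1) * s := by
            apply mul_lt_mul_of_pos_right this hs
    · intro hmem
      rw [Metric.mem_ball] at hmem
      have h1 : (⌊dist y x / s⌋₊ : ℝ) ≤ dist y x / s :=
        Nat.floor_le (by positivity)
      have : (⌊dist y x / s⌋₊ : ℝ) * s ≤ dist y x := by
        calc (⌊dist y x / s⌋₊ : ℝ) * s ≤ dist y x / s * s := by nlinarith
          _ = dist y x := by field_simp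
      linarith
  -- annuli estimate
  have hann : ∫⁻ y, ENNReal.ofReal (Real.exp (-(dist x y ^ 2 / (2 * D * t))) * |u₀ y| ^ p) ∂μ ≤
      ENNReal.ofReal (S * (N ^ p * t ^ (lam / 2))) := by
    have step : ∀ k : ℕ,
        ∫⁻ y in A k, ENNReal.ofReal (Real.exp (-(dist x y ^ 2 / (2 * D * t))) * |u₀ y| ^ p) ∂μ ≤
        ENNReal.ofReal (a k * (N ^ p * t ^ (lam / 2))) := by
      intro k
      have hpt : ∀ y ∈ A k,
          ENNReal.ofReal (Real.exp (-(dist x y ^ 2 / (2 * D * t))) * |u₀ y| ^ p) ≤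
          ENNReal.ofReal (Real.exp (-(k : ℝ) ^ 2 / (2 * D))) * ENNReal.ofReal (|u₀ y| ^ p) := by
        intro y hy
        rw [← ENNReal.ofReal_mul (Real.exp_pos _).le]
        apply ENNReal.ofReal_le_ofReal
        apply mul_le_mul_of_nonneg_right _ (Real.rpow_nonneg (abs_nonneg _) p)
        apply Real.exp_le_exp.mpr
        have hdy : (k : ℝ) * s ≤ dist y x := by
          by_contra hcon
          push_neg at hcon
          exact hy.2 (Metric.mem_ball.mpr hcon)
        have hd : (k : ℝ) * s ≤ dist x y := by rwa [dist_comm]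
        have hd2 : (k : ℝ) ^ 2 * t ≤ dist x y ^ 2 := by
          have h0 : (0 : ℝ) ≤ (k : ℝ) * s := by positivity
          have h1 := mul_self_le_mul_self h0 hd
          have hss : s * s = t := Real.mul_self_sqrt ht.le
          calc (k : ℝ) ^ 2 * t = ((k : ℝ) * s) * ((k : ℝ) * s) := by rw [← hss]; ring
            _ ≤ dist x y * dist x y := h1
            _ = dist x y ^ 2 := (sq (dist x y)).symm
        rw [neg_div, neg_le_neg_iff, div_le_div_iff₀ (by positivity) (by positivity)]
        nlinarith [hD.le, ht.le]
      calc ∫⁻ y in A k, ENNReal.ofReal (Real.exp (-(dist x y ^ 2 / (2 * D * t))) * |u₀ y| ^ p) ∂μ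
          ≤ ∫⁻ y in A k, ENNReal.ofReal (Real.exp (-(k : ℝ) ^ 2 / (2 * D)))
              * ENNReal.ofReal (|u₀ y| ^ p) ∂μ := setLIntegral_mono' (hAmeas k) hpt
        _ = ENNReal.ofReal (Real.exp (-(k : ℝ) ^ 2 / (2 * D)))
              * ∫⁻ y in A k, ENNReal.ofReal (|u₀ y| ^ p) ∂μ :=
            lintegral_const_mul' _ _ ENNReal.ofReal_ne_top
        _ ≤ ENNReal.ofReal (Real.exp (-(k : ℝ) ^ 2 / (2 * D)))
              * ENNReal.ofReal (N ^ p * (((k : ℝ) + 1) * s) ^ lam) := by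
            apply mul_le_mul_right
            calc ∫⁻ y in A k, ENNReal.ofReal (|u₀ y| ^ p) ∂μ
                ≤ ∫⁻ y in Metric.ball x (((k : ℝ) + 1) * s), ENNReal.ofReal (|u₀ y| ^ p) ∂μ :=
                  lintegral_mono_set Set.diff_subset
              _ ≤ ENNReal.ofReal (N ^ p * (((k : ℝ) + 1) * s) ^ lam) :=
                  hmor x _ (by positivity)
        _ = ENNReal.ofReal (a k * (N ^ p * t ^ (lam / 2))) := by
            rw [← ENNReal.ofReal_mul (Real.exp_pos _).le]
            congr 1
            rw [Real.mul_rpow (by positivity) hs.le, hslam, ha]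
            ring
    calc ∫⁻ y, ENNReal.ofReal (Real.exp (-(dist x y ^ 2 / (2 * D * t))) * |u₀ y| ^ p) ∂μ
        = ∫⁻ y in ⋃ k, A k, ENNReal.ofReal
            (Real.exp (-(dist x y ^ 2 / (2 * D * t))) * |u₀ y| ^ p) ∂μ := by
          rw [hAcover, Measure.restrict_univ]
      _ = ∑' k, ∫⁻ y in A k, ENNReal.ofReal
            (Real.exp (-(dist x y ^ 2 / (2 * D * t))) * |u₀ y| ^ p) ∂μ :=
          lintegral_iUnion hAmeas hAdisj _
      _ ≤ ∑' k, ENNReal.ofReal (a k * (N ^ p * t ^ (lam / 2))) := ENNReal.tsum_le_tsum step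
      _ = ENNReal.ofReal (∑' k, a k * (N ^ p * t ^ (lam / 2))) :=
          (ENNReal.ofReal_tsum_of_nonneg (fun k => by positivity)
            (hSsum.mul_right _)).symm
      _ = ENNReal.ofReal (S * (N ^ p * t ^ (lam / 2))) := by rw [tsum_mul_right]
  -- max cleanup
  have hmin : 0 < min 1 t := lt_min one_pos ht
  have hmax : max 1 (t ^ (-(m / 2))) = (min 1 t) ^ (-(m / 2)) := by
    rcases le_total t 1 with h | h
    · rw [min_eq_right h]
      exact max_eq_right (Real.one_le_rpow_of_pos_of_le_one_of_nonpos ht h (by nlinarith))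
    · rw [min_eq_left h, Real.one_rpow]
      exact max_eq_left (Real.rpow_le_one_of_one_le_of_nonpos h (by nlinarith))
  -- core estimate
  have hcore : ∫⁻ y, ENNReal.ofReal (G t x y * |u₀ y| ^ p) ∂μ ≤
      ENNReal.ofReal ((C₀ * S) * ((min 1 t) ^ (-(m / 2))
        * (Real.exp (-(lam₁ * t)) * (N ^ p * t ^ (lam / 2))))) := by
    set c : ℝ := C₀ * max 1 (t ^ (-(m / 2))) * Real.exp (-(lam₁ * t)) with hc
    have hc0 : 0 ≤ c := by
      apply mul_nonneg (mul_nonneg hC₀.le _) (Real.exp_pos _).le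
      exact le_trans zero_le_one (le_max_left _ _)
    calc ∫⁻ y, ENNReal.ofReal (G t x y * |u₀ y| ^ p) ∂μ
        ≤ ∫⁻ y, ENNReal.ofReal
            (c * (Real.exp (-(dist x y ^ 2 / (2 * D * t))) * |u₀ y| ^ p)) ∂μ := by
          apply lintegral_mono
          intro y
          apply ENNReal.ofReal_le_ofReal
          have hsplit : Real.exp (-(lam₁ * t) - dist x y ^ 2 / (2 * D * t)) =
              Real.exp (-(lam₁ * t)) * Real.exp (-(dist x y ^ 2 / (2 * D * t))) := by
            rw [← Real.exp_add]; ring_nf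
          have := hGbd t ht x y
          rw [hsplit] at this
          calc G t x y * |u₀ y| ^ p
              ≤ (C₀ * max 1 (t ^ (-(m / 2))) * (Real.exp (-(lam₁ * t))
                  * Real.exp (-(dist x y ^ 2 / (2 * D * t))))) * |u₀ y| ^ p := by
                apply mul_le_mul_of_nonneg_right _ (Real.rpow_nonneg (abs_nonneg _) p)
                linarith [this]
            _ = c * (Real.exp (-(dist x y ^ 2 / (2 * D * t))) * |u₀ y| ^ p) := by
                rw [hc]; ring
      _ = ENNReal.ofReal c * ∫⁻ y, ENNReal.ofReal
            (Real.exp (-(dist x y ^ 2 / (2 * D * t))) * |u₀ y| ^ p) ∂μ := by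
          simp_rw [ENNReal.ofReal_mul hc0]
          exact lintegral_const_mul' _ _ ENNReal.ofReal_ne_top
      _ ≤ ENNReal.ofReal c * ENNReal.ofReal (S * (N ^ p * t ^ (lam / 2))) :=
          mul_le_mul_right hann _
      _ = ENNReal.ofReal ((C₀ * S) * ((min 1 t) ^ (-(m / 2))
            * (Real.exp (-(lam₁ * t)) * (N ^ p * t ^ (lam / 2))))) := by
          rw [← ENNReal.ofReal_mul hc0, hc, hmax]
          congr 1
          ring
  -- Hölder step
  have hhold : ∫⁻ y, ENNReal.ofReal (G t x y * |u₀ y|) ∂μ ≤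
      (∫⁻ y, ENNReal.ofReal (G t x y * |u₀ y| ^ p) ∂μ) ^ (1 / p) := by
    rcases eq_or_lt_of_le hp with heq | hlt
    · rw [← heq]
      norm_num [Real.rpow_one]
    · have hq : p.HolderConjugate (p / (p - 1)) := Real.HolderConjugate.conjExponent hlt
      set q : ℝ := p / (p - 1) with hqdef
      have hq0 : 0 < q := hq.symm.pos
      set f : X → ENNReal := fun y => ENNReal.ofReal (G t x y) ^ (1 / p)
        * ENNReal.ofReal |u₀ y| with hf
      set g : X → ENNReal := fun y => ENNReal.ofReal (G t x y) ^ (1 / q) with hg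
      have hfm : AEMeasurable f μ :=
        ((hGm.ennreal_ofReal.pow measurable_const).mul hu₀.abs.ennreal_ofReal).aemeasurable
      have hgm : AEMeasurable g μ :=
        (hGm.ennreal_ofReal.pow measurable_const).aemeasurable
      have hkey : ∀ y, ENNReal.ofReal (G t x y * |u₀ y|) = (f * g) y := by
        intro y
        rw [ENNReal.ofReal_mul (hG0 t ht x y)]
        show _ = f y * g y
        rw [hf, hg]
        simp only
        rw [mul_right_comm, ← ENNReal.rpow_add_of_nonneg _ _ (by positivity) (by positivity),
          show 1 / p + 1 / q = 1 by
            rw [one_div, one_div]; exact hq.inv_add_inv_eq_one,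
          ENNReal.rpow_one]
      have hfp : ∀ y, f y ^ p = ENNReal.ofReal (G t x y * |u₀ y| ^ p) := by
        intro y
        rw [hf]
        simp only
        rw [ENNReal.mul_rpow_of_nonneg _ _ hp0.le, ← ENNReal.rpow_mul,
          one_div_mul_cancel hp0.ne', ENNReal.rpow_one,
          ENNReal.ofReal_rpow_of_nonneg (abs_nonneg _) hp0.le,
          ← ENNReal.ofReal_mul (hG0 t ht x y)]
      have hgq : ∀ y, g y ^ q = ENNReal.ofReal (G t x y) := by
        intro y
        rw [hg]
        simp only
        rw [← ENNReal.rpow_mul, one_div_mul_cancel hq0.ne', ENNReal.rpow_one]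
      calc ∫⁻ y, ENNReal.ofReal (G t x y * |u₀ y|) ∂μ
          = ∫⁻ y, (f * g) y ∂μ := lintegral_congr hkey
        _ ≤ (∫⁻ y, f y ^ p ∂μ) ^ (1 / p) * (∫⁻ y, g y ^ q ∂μ) ^ (1 / q) :=
            ENNReal.lintegral_mul_le_Lp_mul_Lq μ hq hfm hgm
        _ ≤ (∫⁻ y, f y ^ p ∂μ) ^ (1 / p) * 1 := by
            apply mul_le_mul_right
            calc (∫⁻ y, g y ^ q ∂μ) ^ (1 / q)
                ≤ (1 : ENNReal) ^ (1 / q) := by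
                  apply ENNReal.rpow_le_rpow _ (by positivity)
                  simp_rw [hgq]
                  exact hGmarkov t ht x
              _ = 1 := ENNReal.one_rpow _
        _ = (∫⁻ y, ENNReal.ofReal (G t x y * |u₀ y| ^ p) ∂μ) ^ (1 / p) := by
            rw [mul_one]
            congr 1
            exact lintegral_congr hfp
  -- final computation
  have hB0 : 0 ≤ (C₀ * S) * ((min 1 t) ^ (-(m / 2))
      * (Real.exp (-(lam₁ * t)) * (N ^ p * t ^ (lam / 2)))) := by positivity
  calc ∫⁻ y, ENNReal.ofReal (G t x y * |u₀ y|) ∂μ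
      ≤ (∫⁻ y, ENNReal.ofReal (G t x y * |u₀ y| ^ p) ∂μ) ^ (1 / p) := hhold
    _ ≤ (ENNReal.ofReal ((C₀ * S) * ((min 1 t) ^ (-(m / 2))
          * (Real.exp (-(lam₁ * t)) * (N ^ p * t ^ (lam / 2)))))) ^ (1 / p) :=
        ENNReal.rpow_le_rpow hcore (by positivity)
    _ = ENNReal.ofReal (((C₀ * S) * ((min 1 t) ^ (-(m / 2))
          * (Real.exp (-(lam₁ * t)) * (N ^ p * t ^ (lam / 2))))) ^ (1 / p)) :=
        ENNReal.ofReal_rpow_of_nonneg hB0 (by positivity)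
    _ = ENNReal.ofReal ((C₀ * S) ^ (1 / p) * (min 1 t) ^ (-(m / (2 * p))) * t ^ (lam / (2 * p)) *
          Real.exp (-(lam₁ * t / p)) * N) := by
        congr 1
        rw [Real.mul_rpow (by positivity) (by positivity),
          Real.mul_rpow (by positivity) (by positivity),
          Real.mul_rpow (by positivity) (by positivity),
          Real.mul_rpow (by positivity) (by positivity),
          Real.mul_rpow (by positivity) (by positivity)]
        rw [← Real.rpow_mul hmin.le, ← Real.rpow_mul ht.le, ← Real.rpow_mul hN,
          ← Real.exp_mul,
          show -(m / 2) * (1 / p) = -(m / (2 * p)) by ring,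
          show lam / 2 * (1 / p) = lam / (2 * p) by ring,
          show -(lam₁ * t) * (1 / p) = -(lam₁ * t / p) by ring,
          show p * (1 / p) = 1 by field_simp,
          Real.rpow_one]
        ring
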